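/- Let C be a cartesian closed category with a fixed object S, and T the state monad T X = (S × X)^S arising from the adjunction (S × –) ⊣ (–)^S. Let (X, h) be a T-algebra, set f_X = h ∘ (q_{S×X})^* : S × X ⟶ X, and suppose f_X = m ∘ e with e : S × X ⟶ Y a regular epimorphism and m : Y ⟶ X a monomorphism. Then the transpose e^* : X ⟶ Y^S has a retraction; explicitly, (h ∘ θ_X) ∘ m^S is a retraction of e^*, where θ_X = ⟨p_{X^S}, ε_X⟩^* : X^S ⟶ T X. -/

import Mathlib

open CategoryTheory CategoryTheory.MonoidalCategory CategoryTheory.Limits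
  CategoryTheory.CartesianMonoidalCategory

/-- In a cartesian closed category `C` with a fixed object `S`, for the state
monad `T X = (S × X)^S` and a `T`-algebra `(X, h)`, if `f_X = h ∘ (q_{S×X})^*` factors as a
regular epi `e` followed by a mono `m`, then `(h ∘ θ_X) ∘ m^S` is a retraction of `e^*`. -/
theorem stmt3 {C : Type u} [Category.{v} C] [CartesianMonoidalCategory C] [MonoidalClosed C]
    (S : C) (A : ((ihom.adjunction S).toMonad).Algebra)
    (Y : C) (e : S ⊗ A.A ⟶ Y) (m : Y ⟶ A.A)
    (hfac : MonoidalClosed.curry (snd S (S ⊗ A.A)) ≫ A.a = e ≫ m)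
    (he : Nonempty (RegularEpi e)) (hm : Mono m) :
    MonoidalClosed.curry e ≫
      ((ihom S).map m ≫
        MonoidalClosed.curry (lift (fst S ((ihom S).obj A.A)) ((ihom.ev S).app A.A)) ≫ A.a) =
      𝟙 A.A := by
  set κ := MonoidalClosed.curry (snd S (S ⊗ A.A)) with hκ
  have s1 : MonoidalClosed.curry e ≫ (ihom S).map m = MonoidalClosed.curry (κ ≫ A.a) := by
    rw [← MonoidalClosed.curry_natural_right, ← hfac]
  have s2 : MonoidalClosed.curry (κ ≫ A.a) ≫
      MonoidalClosed.curry (lift (fst S ((ihom S).obj A.A)) ((ihom.ev S).app A.A)) =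
      MonoidalClosed.curry (lift (fst S A.A) κ ≫ (S ◁ A.a)) := by
    rw [← MonoidalClosed.curry_natural_left]
    congr 1
    apply CartesianMonoidalCategory.hom_ext
    · simp
      exact ((congrArg (lift (fst S A.A) κ ≫ ·) (whiskerLeft_fst S A.a)).trans (lift_fst _ _)).symm
    · simp [← MonoidalClosed.uncurry_eq]
      exact ((congrArg (lift (fst S A.A) κ ≫ ·) (whiskerLeft_snd S A.a)).trans
        ((Category.assoc _ _ _).symm.trans (congrArg (· ≫ A.a) (lift_snd _ _)))).symm
  have s3 : MonoidalClosed.curry (lift (fst S A.A) κ ≫ (S ◁ A.a)) =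
      MonoidalClosed.curry (lift (fst S A.A) κ) ≫
        ((ihom.adjunction S).toMonad).map A.a :=
    MonoidalClosed.curry_natural_right _ _
  have s4 : MonoidalClosed.curry (lift (fst S A.A) κ) ≫
      ((ihom.adjunction S).toMonad).μ.app A.A = ((ihom.adjunction S).toMonad).η.app A.A := by
    show _ ≫ (ihom S).map ((ihom.adjunction S).counit.app (S ⊗ A.A)) = _
    rw [← MonoidalClosed.curry_natural_right]
    have h1 : lift (fst S A.A) κ ≫ (ihom.adjunction S).counit.app (S ⊗ A.A) =
        𝟙 (S ⊗ A.A) := by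
      have h2 : lift (fst S A.A) κ = lift (fst S A.A) (𝟙 _) ≫ (S ◁ κ) := by
        apply CartesianMonoidalCategory.hom_ext <;> simp
      rw [h2, Category.assoc]
      have h3 : (S ◁ κ) ≫ (ihom.adjunction S).counit.app (S ⊗ A.A) =
          MonoidalClosed.uncurry κ := (MonoidalClosed.uncurry_eq κ).symm
      rw [h3, hκ, MonoidalClosed.uncurry_curry]
      apply CartesianMonoidalCategory.hom_ext <;> simp
    rw [h1]
    exact MonoidalClosed.curry_id_eq_coev _ _
  calc MonoidalClosed.curry e ≫
      ((ihom S).map m ≫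
        MonoidalClosed.curry (lift (fst S ((ihom S).obj A.A)) ((ihom.ev S).app A.A)) ≫ A.a)
      = (MonoidalClosed.curry (κ ≫ A.a) ≫
          MonoidalClosed.curry (lift (fst S ((ihom S).obj A.A)) ((ihom.ev S).app A.A))) ≫ A.a := by
        rw [← s1]; exact (Category.assoc _ _ _).symm.trans (Category.assoc _ _ _).symm
    _ = MonoidalClosed.curry (lift (fst S A.A) κ) ≫
          ((ihom.adjunction S).toMonad).map A.a ≫ A.a := by
        rw [s2, s3]; exact Category.assoc _ _ _
    _ = MonoidalClosed.curry (lift (fst S A.A) κ) ≫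
          ((ihom.adjunction S).toMonad).μ.app A.A ≫ A.a := by
        exact congrArg (_ ≫ ·) A.assoc.symm
    _ = ((ihom.adjunction S).toMonad).η.app A.A ≫ A.a := by rw [← s4]; exact (Category.assoc _ _ _).symm
    _ = 𝟙 A.A := A.unit
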